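/- Let G be a profinite group which is a semidirect product G = H ⋉ N of closed subgroups H and N (N normal, G = HN, H ∩ N = 1). Suppose every closed subgroup of H has a closed permutable complement in H, and every open subgroup of N has a G-invariant permutable complement in N. Then every open subgroup of G has a permutable complement in G. -/

import Mathlib

open Pointwise

/-- If a profinite group `G = H ⋉ N` is a semidirect product of closed subgroups, `H` is
profinite-C, and every open subgroup of `N` has a `G`-invariant permutable complement in
`N`, then every open subgroup of `G` has a permutable complement in `G`. -/
theorem stmt13 {G : Type*} [Group G] [TopologicalSpace G] [IsTopologicalGroup G]
    [CompactSpace G] [T2Space G] [TotallyDisconnectedSpace G]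
    (H N : Subgroup G) [N.Normal] (hHc : IsClosed (H : Set G)) (hNc : IsClosed (N : Set G))
    (hsd : (H : Set G) * (N : Set G) = Set.univ) (hHN : H ⊓ N = ⊥)
    (hH : ∀ E : Subgroup G, E ≤ H → IsClosed (E : Set G) → ∃ D : Subgroup G, D ≤ H ∧
      IsClosed (D : Set G) ∧ (E : Set G) * (D : Set G) = (H : Set G) ∧ E ⊓ D = ⊥)
    (hN : ∀ M : Subgroup G, M ≤ N → IsOpen {x : N | (x : G) ∈ M} →
      ∃ C : Subgroup G, C ≤ N ∧ C.Normal ∧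
        (M : Set G) * (C : Set G) = (N : Set G) ∧ M ⊓ C = ⊥) :
    ∀ E : Subgroup G, IsOpen (E : Set G) → ∃ D : Subgroup G,
      (E : Set G) * (D : Set G) = Set.univ ∧ E ⊓ D = ⊥ := by
  intro E hE
  -- Get a G-invariant permutable complement C of E ⊓ N in N
  obtain ⟨C, hCN, hCnorm, hMC, hMCbot⟩ := hN (E ⊓ N) inf_le_right (by
    have h1 : IsOpen (Subtype.val ⁻¹' (E : Set G) : Set N) :=
      continuous_subtype_val.isOpen_preimage _ hE
    convert h1 using 1
    ext x
    simp only [Set.mem_setOf_eq, Subgroup.mem_inf, Set.mem_preimage, SetLike.mem_coe]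
    exact ⟨fun h => h.1, fun h => ⟨h, x.2⟩⟩)
  haveI := hCnorm
  -- N ≤ E ⊔ C
  have hNle : N ≤ E ⊔ C := by
    intro n hn
    have hn' : n ∈ ((E ⊓ N : Subgroup G) : Set G) * (C : Set G) := hMC ▸ hn
    obtain ⟨m, hm, c, hc, rfl⟩ := hn'
    exact mul_mem ((le_sup_left : E ≤ E ⊔ C) hm.1) ((le_sup_right : C ≤ E ⊔ C) hc)
  -- K is the "projection" of E to H
  set K : Subgroup G := H ⊓ (E ⊔ C) with hKdef
  have hKclosed : IsClosed (K : Set G) := by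
    have hopen : IsOpen ((E ⊔ C : Subgroup G) : Set G) :=
      Subgroup.isOpen_mono (le_sup_left : E ≤ E ⊔ C) hE
    exact hHc.inter ((E ⊔ C).isClosed_of_isOpen hopen)
  obtain ⟨D₀, hD₀H, hD₀closed, hKD₀, hKD₀bot⟩ := hH K inf_le_left hKclosed
  refine ⟨D₀ ⊔ C, ?_, ?_⟩
  · -- (E : Set G) * (D₀ ⊔ C) = univ
    apply Set.eq_univ_of_univ_subset
    intro g _
    have hg : g ∈ (H : Set G) * (N : Set G) := hsd ▸ Set.mem_univ g
    obtain ⟨h, hh, n, hn, rfl⟩ := hg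
    have hh' : h ∈ (K : Set G) * (D₀ : Set G) := hKD₀ ▸ hh
    obtain ⟨k, hk, d, hd, rfl⟩ := hh'
    -- k ∈ E ⊔ C, so k = e * c₀
    have hk' : k ∈ ((E ⊔ C : Subgroup G) : Set G) := hk.2
    rw [Subgroup.mul_normal E C] at hk'
    obtain ⟨e, he, c₀, hc₀, rfl⟩ := hk'
    -- n' := d⁻¹ * c₀ * d * n ∈ N
    have hc₀' : d⁻¹ * c₀ * d ∈ C := by
      have := hCnorm.conj_mem c₀ hc₀ d⁻¹
      simpa [mul_assoc] using this
    have hn' : d⁻¹ * c₀ * d * n ∈ (N : Set G) := mul_mem (hCN hc₀') hn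
    rw [← hMC] at hn'
    obtain ⟨m, hm, c, hc, hmc⟩ := hn'
    -- ν := d * m * d⁻¹ ∈ N
    have hν : d * m * d⁻¹ ∈ (N : Set G) :=
      (inferInstance : N.Normal).conj_mem m hm.2 d
    rw [← hMC] at hν
    obtain ⟨m₁, hm₁, c₁, hc₁, hm₁c₁⟩ := hν
    refine ⟨e * m₁, mul_mem he hm₁.1, c₁ * d * c,
      mul_mem (mul_mem ((le_sup_right : C ≤ D₀ ⊔ C) hc₁)
        ((le_sup_left : D₀ ≤ D₀ ⊔ C) hd)) ((le_sup_right : C ≤ D₀ ⊔ C) hc), ?_⟩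
    have hc₁eq : c₁ = m₁⁻¹ * (d * m * d⁻¹) := by
      rw [← hm₁c₁]; group
    have hceq : c = m⁻¹ * (d⁻¹ * c₀ * d * n) := by
      rw [← hmc]; group
    rw [hc₁eq, hceq]
    group
  · -- E ⊓ (D₀ ⊔ C) = ⊥
    rw [eq_bot_iff]
    intro x hx
    obtain ⟨hxE, hxD⟩ := hx
    have hx' : x ∈ (D₀ : Set G) * (C : Set G) := by
      rw [← Subgroup.mul_normal D₀ C]; exact hxD
    obtain ⟨d, hd, c, hc, rfl⟩ := hx'
    have hdEC : d ∈ E ⊔ C := by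
      have : d = (d * c) * c⁻¹ := by group
      rw [this]
      exact mul_mem ((le_sup_left : E ≤ E ⊔ C) hxE)
        ((le_sup_right : C ≤ E ⊔ C) (inv_mem hc))
    have hdK : d ∈ K ⊓ D₀ := ⟨⟨hD₀H hd, hdEC⟩, hd⟩
    rw [hKD₀bot] at hdK
    have hd1 : d = 1 := hdK
    subst hd1
    simp only [one_mul] at hxE ⊢
    have : c ∈ (E ⊓ N) ⊓ C := ⟨⟨hxE, hCN hc⟩, hc⟩
    rw [hMCbot] at this
    exact this
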